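/- Let Ñ ≥ 1 be a natural number, let Ω_θ and Ω_r be real numbers with Ω_r ≠ 0, and let k be an integer that is not an integer multiple of Ñ. If q = (2k − Ñ·Ω_θ)/(2·Ñ·Ω_r), then Ω := 2·q·Ω_r + Ω_θ equals 2k/Ñ, sin(Ñ·π·Ω/2) = 0 while sin(π·Ω/2) ≠ 0, and consequently ∑_{ñ=1}^{Ñ} exp( i·π·(2ñ−Ñ−1)·Ω/2 ) = 0. -/

import Mathlib

open Finset

/-- Proposition 1 of the paper: for a movable subarray of `Nt` half-wavelength-spaced
antennas, choosing the subarray center position `q = (2k − Nt·Ωθ)/(2·Nt·Ωr)` with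
`k` an integer that is not a multiple of `Nt` nulls the linearized steering-vector
correlation kernel. -/
theorem movable_subarray_nulling (Nt : ℕ) (hNt : 1 ≤ Nt) (Ωθ Ωr : ℝ) (hΩr : Ωr ≠ 0)
    (k : ℤ) (hk : ¬ (Nt : ℤ) ∣ k) (q : ℝ)
    (hq : q = (2 * (k : ℝ) - (Nt : ℝ) * Ωθ) / (2 * (Nt : ℝ) * Ωr)) :
    2 * q * Ωr + Ωθ = 2 * (k : ℝ) / (Nt : ℝ) ∧
    Real.sin ((Nt : ℝ) * Real.pi * (2 * q * Ωr + Ωθ) / 2) = 0 ∧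
    Real.sin (Real.pi * (2 * q * Ωr + Ωθ) / 2) ≠ 0 ∧
    ∑ n ∈ Finset.Icc 1 Nt,
        Complex.exp (Complex.I *
          (Real.pi * ((2 * (n : ℝ) - (Nt : ℝ) - 1) * (2 * q * Ωr + Ωθ) / 2))) = 0 := by
  have hN0 : (Nt : ℝ) ≠ 0 := Nat.cast_ne_zero.mpr (by omega)
  have hπ : Real.pi ≠ 0 := Real.pi_ne_zero
  have hΩ : 2 * q * Ωr + Ωθ = 2 * (k : ℝ) / (Nt : ℝ) := by
    subst hq; field_simp; ring
  have hndvd : ∀ n : ℤ, (n : ℝ) * (Nt : ℝ) ≠ (k : ℝ) := by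
    intro n hn
    apply hk
    exact ⟨n, by exact_mod_cast (by linarith : (k : ℝ) = (Nt : ℝ) * n)⟩
  refine ⟨hΩ, ?_, ?_, ?_⟩
  · rw [hΩ]
    have h1 : (Nt : ℝ) * Real.pi * (2 * (k : ℝ) / (Nt : ℝ)) / 2 = (k : ℝ) * Real.pi := by
      field_simp
    rw [h1]
    exact Real.sin_int_mul_pi k
  · rw [hΩ]
    intro h
    rw [Real.sin_eq_zero_iff] at h
    obtain ⟨n, hn⟩ := h
    apply hndvd n
    have : (n : ℝ) * Real.pi * (Nt : ℝ) = (k : ℝ) * Real.pi := by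
      rw [hn]; field_simp
    have := mul_right_cancel₀ hπ (by linarith : (n : ℝ) * (Nt : ℝ) * Real.pi = (k : ℝ) * Real.pi)
    exact this
  · have hΩC : 2 * (q : ℂ) * (Ωr : ℂ) + (Ωθ : ℂ) = ((2 * (k : ℝ) / (Nt : ℝ) : ℝ) : ℂ) := by
      exact_mod_cast hΩ
    rw [hΩC]
    set Ω : ℝ := 2 * (k : ℝ) / (Nt : ℝ) with hΩdef
    set z : ℂ := Complex.exp (Complex.I * (Real.pi * Ω)) with hz
    have hterm : ∀ n : ℕ,
        Complex.exp (Complex.I * ((Real.pi : ℂ) * ((2 * (n : ℂ) - (Nt : ℂ) - 1) * (Ω : ℂ) / 2)))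
          = z ^ n * Complex.exp (Complex.I * (Real.pi * ((-(Nt : ℝ) - 1) * Ω / 2))) := by
      intro n
      rw [hz, ← Complex.exp_nat_mul, ← Complex.exp_add]
      congr 1
      push_cast
      ring
    have hzNt : z ^ Nt = 1 := by
      rw [hz, ← Complex.exp_nat_mul]
      have : (Nt : ℂ) * (Complex.I * (Real.pi * Ω)) = (k : ℂ) * (2 * Real.pi * Complex.I) := by
        have hNC : (Nt : ℂ) ≠ 0 := Nat.cast_ne_zero.mpr (by omega)
        rw [hΩdef]
        push_cast
        field_simp
      rw [this, Complex.exp_int_mul_two_pi_mul_I]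
    have hz1 : z ≠ 1 := by
      intro h
      rw [hz, Complex.exp_eq_one_iff] at h
      obtain ⟨n, hn⟩ := h
      apply hndvd n
      have him := congrArg Complex.im hn
      simp [Complex.mul_im, Complex.mul_re] at him
      -- him : π * Ω = n * (2 * π)
      have : (n : ℝ) * (Nt : ℝ) * Real.pi = (k : ℝ) * Real.pi := by
        rw [hΩdef] at him
        field_simp at him
        have him' : (k : ℝ) = (Nt : ℝ) * n := by exact_mod_cast him
        linear_combination -Real.pi * him'
      exact mul_right_cancel₀ hπ this
    calc ∑ n ∈ Finset.Icc 1 Nt,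
          Complex.exp (Complex.I * ((Real.pi : ℂ) * ((2 * (n : ℂ) - (Nt : ℂ) - 1) * (Ω : ℂ) / 2)))
        = ∑ n ∈ Finset.Icc 1 Nt,
            z ^ n * Complex.exp (Complex.I * (Real.pi * ((-(Nt : ℝ) - 1) * Ω / 2))) := by
          exact Finset.sum_congr rfl fun n _ => hterm n
      _ = (∑ n ∈ Finset.Icc 1 Nt, z ^ n) *
            Complex.exp (Complex.I * (Real.pi * ((-(Nt : ℝ) - 1) * Ω / 2))) := by
          rw [Finset.sum_mul]
      _ = 0 := by
          have hsum : (∑ n ∈ Finset.Icc 1 Nt, z ^ n) = 0 := by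
            have : ∑ n ∈ Finset.Icc 1 Nt, z ^ n = z * ∑ n ∈ Finset.range Nt, z ^ n := by
              rw [← Finset.Ico_add_one_right_eq_Icc, Finset.sum_Ico_eq_sum_range, Finset.mul_sum]
              simp [pow_add, pow_succ, mul_comm]
            rw [this, geom_sum_eq hz1, hzNt]
            simp
          rw [hsum, zero_mul]
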